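/- Let μ be a stationary ergodic measure on 𝒳^ℤ with strong mixing coefficients satisfying ∑_{s=1}^∞ d(s) < ∞, with sup_{s≥1} μ(X₁ = X_{1+s}) < 1, and whose entropy rate satisfies 0 < ℋ₁ < ∞. Then for every η > 0 and β > 0: lim_{n→∞} (log n) · sup{ μ(X₁^t = X_{1+s}^{t+s}) : s, t ∈ ℕ, 1 ≤ s ≤ ℓ(n), (1+η)(log n)/ℋ₁ ≤ t ≤ β·log n } = 0 (with the convention that the supremum over the empty set is 0). Here X₁^t = X_{1+s}^{t+s} denotes the event that X_i = X_{i+s} for all 1 ≤ i ≤ t. -/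

import Mathlib

open MeasureTheory Filter Real

section

variable {𝒳 : Type*} [Fintype 𝒳] [MeasurableSpace 𝒳] [MeasurableSingletonClass 𝒳]

/-- The left shift on two-sided sequences. -/
def shift {𝒳 : Type*} : (ℤ → 𝒳) → (ℤ → 𝒳) := fun ω i => ω (i + 1)

/-- The pmf of the block `(X_a, …, X_{a+t-1})` under `μ`. -/
noncomputable def blockPmf (μ : Measure (ℤ → 𝒳)) (a : ℤ) (t : ℕ) (x : Fin t → 𝒳) : ℝ :=
  (μ {ω | ∀ i : Fin t, ω (a + ((i : ℕ) : ℤ)) = x i}).toReal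

/-- Shannon entropy of the block `(X_1, …, X_t)`. -/
noncomputable def shannonH (μ : Measure (ℤ → 𝒳)) (t : ℕ) : ℝ :=
  ∑ x : Fin t → 𝒳, Real.negMulLog (blockPmf μ 1 t x)

/-- Order-`α` Rényi entropy of the block `(X_1, …, X_t)`. -/
noncomputable def renyiH (μ : Measure (ℤ → 𝒳)) (α : ℝ) (t : ℕ) : ℝ :=
  (1 - α)⁻¹ * Real.log (∑ x : Fin t → 𝒳, blockPmf μ 1 t x ^ α)

/-- `max_{x : P(x) > 0} log (1 / P_{X_1^t}(x))`. -/
noncomputable def maxInfo (μ : Measure (ℤ → 𝒳)) (t : ℕ) : ℝ :=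
  sSup {r : ℝ | ∃ x : Fin t → 𝒳, 0 < blockPmf μ 1 t x ∧ r = Real.log (1 / blockPmf μ 1 t x)}

/-- The σ-algebra generated by the coordinates with index `≤ i`. -/
def pastSigma (𝒳 : Type*) [MeasurableSpace 𝒳] (i : ℤ) : MeasurableSpace (ℤ → 𝒳) :=
  MeasurableSpace.comap (fun ω (j : {j : ℤ // j ≤ i}) => ω (j : ℤ)) inferInstance

/-- The σ-algebra generated by the coordinates with index `≥ i`. -/
def futureSigma (𝒳 : Type*) [MeasurableSpace 𝒳] (i : ℤ) : MeasurableSpace (ℤ → 𝒳) :=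
  MeasurableSpace.comap (fun ω (j : {j : ℤ // i ≤ j}) => ω (j : ℤ)) inferInstance

/-- Strong mixing coefficient `d(s)`. -/
noncomputable def mixCoef (μ : Measure (ℤ → 𝒳)) (s : ℕ) : ℝ :=
  sSup {r : ℝ | ∃ (i : ℤ) (E F : Set (ℤ → 𝒳)),
    MeasurableSet[pastSigma 𝒳 i] E ∧ MeasurableSet[futureSigma 𝒳 (i + (s : ℤ))] F ∧
    μ E ≠ 0 ∧ r = |(μ (F ∩ E)).toReal / (μ E).toReal - (μ F).toReal|}

/-- The read length `ℓ(n) = ⌈β log n⌉`. -/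
noncomputable def ell (β : ℝ) (n : ℕ) : ℕ := ⌈β * Real.log n⌉₊

/-- The window from which `I(2)` is drawn uniformly, given `I(1) = i₁`. -/
noncomputable def window (n L : ℕ) (i₁ : ℤ) : Finset ℤ :=
  if i₁ ≤ (L : ℤ) - 1 then Finset.Icc (i₁ - (L : ℤ) + 1) (i₁ + (n : ℤ) - (L : ℤ))
  else if i₁ ≤ (n : ℤ) - (L : ℤ) + 1 then Finset.Icc 1 (n : ℤ)
  else Finset.Icc (i₁ + (L : ℤ) - (n : ℤ)) (i₁ + (L : ℤ) - 1)

/-- Joint pmf of the pair of starting indices `(I(1), I(2))`. -/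
noncomputable def idxWeight (n L : ℕ) (i₁ i₂ : ℤ) : ℝ :=
  if i₁ ∈ Finset.Icc 1 (n : ℤ) ∧ i₂ ∈ window n L i₁ then (((n : ℝ)) ^ 2)⁻¹ else 0

/-- The (signed) overlap between the two reads. -/
def overlap (L : ℕ) (i₁ i₂ : ℤ) : ℤ :=
  if i₁ ≤ i₂ then max 0 ((L : ℤ) - (i₂ - i₁)) else -(max 0 ((L : ℤ) - (i₁ - i₂)))

/-- Bayesian error probability of the detector `That` in the noiseless setting. -/
noncomputable def errProb (μ : Measure (ℤ → 𝒳)) (n L : ℕ)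
    (That : (Fin L → 𝒳) → (Fin L → 𝒳) → ℤ) : ℝ :=
  ∑' p : ℤ × ℤ, idxWeight n L p.1 p.2 *
    (μ {ω | That (fun k => ω (p.1 + ((k : ℕ) : ℤ))) (fun k => ω (p.2 + ((k : ℕ) : ℤ))) ≠
        overlap L p.1 p.2}).toReal

/-- Minimal Bayesian error probability over all detectors with values in `𝒯`. -/
noncomputable def Pstar (μ : Measure (ℤ → 𝒳)) (β : ℝ) (n : ℕ) : ℝ :=
  sInf {e : ℝ | ∃ That : (Fin (ell β n) → 𝒳) → (Fin (ell β n) → 𝒳) → ℤ,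
    (∀ y₁ y₂, That y₁ y₂ ∈ Set.Icc (1 - (ell β n : ℤ)) ((ell β n : ℤ))) ∧
    e = errProb μ n (ell β n) That}

set_option linter.unusedSectionVars false

open scoped ENNReal

lemma shift_iterate_apply (m : ℕ) (ω : ℤ → 𝒳) (j : ℤ) : (shift^[m]) ω j = ω (j + m) := by
  induction m generalizing ω j with
  | zero => simp
  | succ k ih =>
    rw [Function.iterate_succ_apply, ih]
    simp [shift]
    ring_nf

def blockEv (a : ℤ) (u : ℕ) (x : Fin u → 𝒳) : Set (ℤ → 𝒳) :=
  {ω | ∀ j : Fin u, ω (a + ((j : ℕ) : ℤ)) = x j}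

lemma blockEv_measurableSet (a : ℤ) (u : ℕ) (x : Fin u → 𝒳) :
    MeasurableSet (blockEv a u x) := by
  have : blockEv a u x = ⋂ j : Fin u, (fun ω : ℤ → 𝒳 => ω (a + ((j:ℕ):ℤ))) ⁻¹' {x j} := by
    ext ω; simp [blockEv]
  rw [this]
  exact MeasurableSet.iInter fun j => (measurable_pi_apply _) (measurableSet_singleton _)

lemma blockEv_shift (a : ℤ) (m : ℕ) (u : ℕ) (x : Fin u → 𝒳) :
    (shift (𝒳:=𝒳))^[m] ⁻¹' blockEv a u x = blockEv (a + m) u x := by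
  ext ω
  simp only [blockEv, Set.mem_preimage, Set.mem_setOf_eq, shift_iterate_apply]
  constructor <;> intro h j <;> [skip; skip] <;>
    · have := h j; rw [← this]; ring_nf

lemma measure_blockEv_stat {μ : Measure (ℤ → 𝒳)} (hmp : MeasurePreserving (shift (𝒳:=𝒳)) μ μ)
    {a : ℤ} (ha : 1 ≤ a) (u : ℕ) (x : Fin u → 𝒳) :
    μ (blockEv a u x) = μ (blockEv 1 u x) := by
  obtain ⟨m, rfl⟩ : ∃ m : ℕ, a = 1 + (m : ℤ) := ⟨(a - 1).toNat, by omega⟩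
  rw [← blockEv_shift, (hmp.iterate m).measure_preimage
    (blockEv_measurableSet 1 u x).nullMeasurableSet]

def pairEv (a b : ℤ) : Set (ℤ → 𝒳) := {ω | ω a = ω b}

lemma pairEv_measurableSet (a b : ℤ) : MeasurableSet (pairEv (𝒳 := 𝒳) a b) := by
  have : pairEv (𝒳 := 𝒳) a b = ⋃ v : 𝒳,
      ((fun ω : ℤ → 𝒳 => ω a) ⁻¹' {v}) ∩ ((fun ω : ℤ → 𝒳 => ω b) ⁻¹' {v}) := by
    ext ω; simp [pairEv, eq_comm]
  rw [this]
  exact MeasurableSet.iUnion fun v =>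
    ((measurable_pi_apply a) (measurableSet_singleton v)).inter
      ((measurable_pi_apply b) (measurableSet_singleton v))

lemma measure_pairEv_stat {μ : Measure (ℤ → 𝒳)} (hmp : MeasurePreserving (shift (𝒳:=𝒳)) μ μ)
    (m r : ℕ) :
    μ (pairEv (1 + (m:ℤ)) (1 + (m:ℤ) + (r:ℤ))) = μ (pairEv 1 (1 + (r:ℤ))) := by
  have hpre : (shift (𝒳:=𝒳))^[m] ⁻¹' pairEv 1 (1 + (r:ℤ)) = pairEv (1 + (m:ℤ)) (1 + (m:ℤ) + (r:ℤ)) := by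
    ext ω
    simp only [pairEv, Set.mem_preimage, Set.mem_setOf_eq, shift_iterate_apply]
    constructor <;> intro h <;> · rw [show (1:ℤ) + (m:ℤ) + (r:ℤ) = 1 + (r:ℤ) + m by ring] at *; exact h
  rw [← hpre, (hmp.iterate m).measure_preimage (pairEv_measurableSet _ _).nullMeasurableSet]

lemma mixSet_elem_le_one {μ : Measure (ℤ → 𝒳)} [IsProbabilityMeasure μ] {s : ℕ} {r : ℝ}
    (hr : r ∈ {r : ℝ | ∃ (i : ℤ) (E F : Set (ℤ → 𝒳)),
      MeasurableSet[pastSigma 𝒳 i] E ∧ MeasurableSet[futureSigma 𝒳 (i + (s : ℤ))] F ∧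
      μ E ≠ 0 ∧ r = |(μ (F ∩ E)).toReal / (μ E).toReal - (μ F).toReal|}) : r ≤ 1 := by
  obtain ⟨i, E, F, hE, hF, hne, rfl⟩ := hr
  have hEfin : μ E ≠ ⊤ := measure_ne_top μ E
  have hbpos : 0 < (μ E).toReal := ENNReal.toReal_pos hne hEfin
  have hab : (μ (F ∩ E)).toReal ≤ (μ E).toReal :=
    ENNReal.toReal_mono hEfin (measure_mono Set.inter_subset_right)
  have h1 : (μ (F ∩ E)).toReal / (μ E).toReal ≤ 1 := by
    rw [div_le_one hbpos]; exact hab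
  have h2 : 0 ≤ (μ (F ∩ E)).toReal / (μ E).toReal := by positivity
  have h3 : (μ F).toReal ≤ 1 := by
    simpa using ENNReal.toReal_mono (by simp) (prob_le_one (μ := μ) (s := F))
  have h4 : (0:ℝ) ≤ (μ F).toReal := ENNReal.toReal_nonneg
  rw [abs_sub_le_iff]; constructor <;> linarith

lemma mixSet_bddAbove (μ : Measure (ℤ → 𝒳)) [IsProbabilityMeasure μ] (s : ℕ) :
    BddAbove {r : ℝ | ∃ (i : ℤ) (E F : Set (ℤ → 𝒳)),
      MeasurableSet[pastSigma 𝒳 i] E ∧ MeasurableSet[futureSigma 𝒳 (i + (s : ℤ))] F ∧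
      μ E ≠ 0 ∧ r = |(μ (F ∩ E)).toReal / (μ E).toReal - (μ F).toReal|} :=
  ⟨1, fun _ hr => mixSet_elem_le_one hr⟩

lemma mixCoef_nonneg (μ : Measure (ℤ → 𝒳)) [IsProbabilityMeasure μ] (s : ℕ) :
    0 ≤ mixCoef μ s := by
  apply Real.sSup_nonneg'
  refine ⟨0, ⟨0, Set.univ, Set.univ, MeasurableSet.univ, MeasurableSet.univ, by simp, ?_⟩, le_refl 0⟩
  simp

lemma mix_bound (μ : Measure (ℤ → 𝒳)) [IsProbabilityMeasure μ] {i : ℤ} {q : ℕ}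
    {E F : Set (ℤ → 𝒳)} (hE : MeasurableSet[pastSigma 𝒳 i] E)
    (hF : MeasurableSet[futureSigma 𝒳 (i + (q : ℤ))] F) :
    (μ (F ∩ E)).toReal ≤ ((μ F).toReal + mixCoef μ q) * (μ E).toReal := by
  by_cases h0 : μ E = 0
  · have : μ (F ∩ E) = 0 := measure_mono_null Set.inter_subset_right h0
    simp [this, h0]
  · have hEfin : μ E ≠ ⊤ := measure_ne_top μ E
    have hbpos : 0 < (μ E).toReal := ENNReal.toReal_pos h0 hEfin
    have hmem : |(μ (F ∩ E)).toReal / (μ E).toReal - (μ F).toReal| ∈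
        {r : ℝ | ∃ (i : ℤ) (E F : Set (ℤ → 𝒳)),
          MeasurableSet[pastSigma 𝒳 i] E ∧ MeasurableSet[futureSigma 𝒳 (i + (q : ℤ))] F ∧
          μ E ≠ 0 ∧ r = |(μ (F ∩ E)).toReal / (μ E).toReal - (μ F).toReal|} :=
      ⟨i, E, F, hE, hF, h0, rfl⟩
    have hle : |(μ (F ∩ E)).toReal / (μ E).toReal - (μ F).toReal| ≤ mixCoef μ q :=
      le_csSup (mixSet_bddAbove μ q) hmem
    have h1 : (μ (F ∩ E)).toReal / (μ E).toReal ≤ (μ F).toReal + mixCoef μ q := by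
      have := (abs_sub_le_iff.mp hle).1
      linarith
    calc (μ (F ∩ E)).toReal = ((μ (F ∩ E)).toReal / (μ E).toReal) * (μ E).toReal := by
          field_simp
      _ ≤ ((μ F).toReal + mixCoef μ q) * (μ E).toReal :=
          mul_le_mul_of_nonneg_right h1 hbpos.le

lemma futureSigma_mono {i j : ℤ} (h : i ≤ j) : futureSigma 𝒳 j ≤ futureSigma 𝒳 i := by
  intro S hS
  change MeasurableSet[futureSigma 𝒳 j] S at hS
  change MeasurableSet[futureSigma 𝒳 i] S
  rw [futureSigma, MeasurableSpace.measurableSet_comap] at hS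
  rw [futureSigma, MeasurableSpace.measurableSet_comap]
  obtain ⟨S', hS', rfl⟩ := hS
  refine ⟨(fun (y : {k : ℤ // i ≤ k} → 𝒳) (k : {k : ℤ // j ≤ k}) => y ⟨(k:ℤ), h.trans k.2⟩) ⁻¹' S',
    (measurable_pi_lambda _ fun k => measurable_pi_apply _) hS', rfl⟩

lemma mixCoef_antitone (μ : Measure (ℤ → 𝒳)) [IsProbabilityMeasure μ] :
    Antitone (mixCoef μ) := by
  intro s s' h
  apply Real.sSup_le _ (mixCoef_nonneg μ s)
  rintro r ⟨i, E, F, hE, hF, hne, rfl⟩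
  exact le_csSup (mixSet_bddAbove μ s)
    ⟨i, E, F, hE, futureSigma_mono (by omega) _ hF, hne, rfl⟩

lemma blockEv_mem_past {a : ℤ} {u : ℕ} (x : Fin u → 𝒳) {i : ℤ} (h : a + (u:ℤ) ≤ i + 1) :
    MeasurableSet[pastSigma 𝒳 i] (blockEv a u x) := by
  rw [pastSigma, MeasurableSpace.measurableSet_comap]
  refine ⟨{y : {j : ℤ // j ≤ i} → 𝒳 | ∀ j : Fin u, y ⟨a + ((j:ℕ):ℤ), by omega⟩ = x j}, ?_, ?_⟩
  · have : {y : {j : ℤ // j ≤ i} → 𝒳 | ∀ j : Fin u, y ⟨a + ((j:ℕ):ℤ), by omega⟩ = x j} =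
        ⋂ j : Fin u, (fun y : {j : ℤ // j ≤ i} → 𝒳 => y ⟨a + ((j:ℕ):ℤ), by omega⟩) ⁻¹' {x j} := by
      ext y; simp
    rw [this]
    exact MeasurableSet.iInter fun j => (measurable_pi_apply _) (measurableSet_singleton _)
  · ext ω; simp [blockEv]

lemma blockEv_mem_future {a : ℤ} {u : ℕ} (x : Fin u → 𝒳) {i : ℤ} (h : i ≤ a) :
    MeasurableSet[futureSigma 𝒳 i] (blockEv a u x) := by
  rw [futureSigma, MeasurableSpace.measurableSet_comap]
  refine ⟨{y : {j : ℤ // i ≤ j} → 𝒳 | ∀ j : Fin u, y ⟨a + ((j:ℕ):ℤ), by omega⟩ = x j}, ?_, ?_⟩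
  · have : {y : {j : ℤ // i ≤ j} → 𝒳 | ∀ j : Fin u, y ⟨a + ((j:ℕ):ℤ), by omega⟩ = x j} =
        ⋂ j : Fin u, (fun y : {j : ℤ // i ≤ j} → 𝒳 => y ⟨a + ((j:ℕ):ℤ), by omega⟩) ⁻¹' {x j} := by
      ext y; simp
    rw [this]
    exact MeasurableSet.iInter fun j => (measurable_pi_apply _) (measurableSet_singleton _)
  · ext ω; simp [blockEv]


noncomputable def Mx (μ : Measure (ℤ → 𝒳)) (u : ℕ) : ℝ :=
  ⨆ x : Fin u → 𝒳, (μ (blockEv 1 u x)).toReal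

lemma Mx_bddAbove (μ : Measure (ℤ → 𝒳)) (u : ℕ) :
    BddAbove (Set.range fun x : Fin u → 𝒳 => (μ (blockEv 1 u x)).toReal) :=
  (Set.finite_range _).bddAbove

lemma Mx_nonneg (μ : Measure (ℤ → 𝒳)) (u : ℕ) : 0 ≤ Mx μ u :=
  Real.iSup_nonneg fun _ => ENNReal.toReal_nonneg

lemma le_Mx (μ : Measure (ℤ → 𝒳)) (u : ℕ) (x : Fin u → 𝒳) :
    (μ (blockEv 1 u x)).toReal ≤ Mx μ u :=
  le_ciSup (Mx_bddAbove μ u) x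

lemma Mx_antitone [Nonempty 𝒳] (μ : Measure (ℤ → 𝒳)) [IsProbabilityMeasure μ]
    {v u : ℕ} (h : v ≤ u) : Mx μ u ≤ Mx μ v := by
  apply ciSup_le
  intro x
  have hsub : blockEv 1 u x ⊆ blockEv 1 v (fun j => x (Fin.castLE h j)) := by
    intro ω hω j
    exact hω ⟨(j:ℕ), by omega⟩
  calc (μ (blockEv 1 u x)).toReal
      ≤ (μ (blockEv 1 v (fun j => x (Fin.castLE h j)))).toReal :=
        ENNReal.toReal_mono (measure_ne_top μ _) (measure_mono hsub)
    _ ≤ Mx μ v := le_Mx μ v _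

lemma Mx_base [Nonempty 𝒳] {μ : Measure (ℤ → 𝒳)} [IsProbabilityMeasure μ]
    (hmp : MeasurePreserving (shift (𝒳:=𝒳)) μ μ) {c : ℝ}
    (hc : ∀ s : ℕ, 1 ≤ s → (μ {ω : ℤ → 𝒳 | ω 1 = ω (1 + (s:ℤ))}).toReal ≤ c)
    {u : ℕ} (hu : Fintype.card 𝒳 + 1 ≤ u) : Mx μ u ≤ c := by
  apply ciSup_le
  intro x
  have key : ∀ (a b : ℕ) (hab : a < b) (hbu : b < u), x ⟨a, by omega⟩ = x ⟨b, by omega⟩ →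
      (μ (blockEv 1 u x)).toReal ≤ c := by
    intro a b hab hbu hx
    have hsub : blockEv 1 u x ⊆ pairEv (1 + (a:ℤ)) (1 + (a:ℤ) + ((b - a : ℕ):ℤ)) := by
      intro ω hω
      have h1 := hω ⟨a, by omega⟩
      have h2 := hω ⟨b, by omega⟩
      have : (1:ℤ) + (a:ℤ) + ((b - a : ℕ):ℤ) = 1 + (b:ℤ) := by omega
      rw [pairEv, Set.mem_setOf_eq, this, h1, h2, hx]
    calc (μ (blockEv 1 u x)).toReal
        ≤ (μ (pairEv (1 + (a:ℤ)) (1 + (a:ℤ) + ((b - a : ℕ):ℤ)))).toReal :=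
          ENNReal.toReal_mono (measure_ne_top μ _) (measure_mono hsub)
      _ = (μ (pairEv 1 (1 + ((b - a : ℕ):ℤ)))).toReal := by
          rw [measure_pairEv_stat hmp]
      _ ≤ c := hc (b - a) (by omega)
  obtain ⟨a, b, hab, heq⟩ := Fintype.exists_ne_map_eq_of_card_lt
    (fun i : Fin (Fintype.card 𝒳 + 1) => x ⟨(i:ℕ), by omega⟩) (by simp)
  rcases Ne.lt_or_gt (fun h : (a:ℕ) = (b:ℕ) => hab (Fin.ext h)) with h | h
  · exact key a b h (by omega) (by simpa using heq)
  · exact key b a h (by omega) (by simpa using heq.symm)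

lemma Mx_rec [Nonempty 𝒳] {μ : Measure (ℤ → 𝒳)} [IsProbabilityMeasure μ]
    (hmp : MeasurePreserving (shift (𝒳:=𝒳)) μ μ) (a g b : ℕ) :
    Mx μ (a + g + b) ≤ Mx μ a * (Mx μ b + mixCoef μ g) := by
  apply ciSup_le
  intro x
  set x1 : Fin a → 𝒳 := fun j => x ⟨(j:ℕ), by omega⟩ with hx1
  set x2 : Fin b → 𝒳 := fun j => x ⟨a + g + (j:ℕ), by omega⟩ with hx2
  have hsub : blockEv 1 (a+g+b) x ⊆
      blockEv (1 + (a:ℤ) + (g:ℤ)) b x2 ∩ blockEv 1 a x1 := by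
    intro ω hω
    constructor
    · intro j
      have := hω ⟨a + g + (j:ℕ), by omega⟩
      show ω (1 + (a:ℤ) + (g:ℤ) + ((j:ℕ):ℤ)) = x ⟨a + g + (j:ℕ), by omega⟩
      rw [← this]; congr 1; push_cast; ring
    · intro j
      exact hω ⟨(j:ℕ), by omega⟩
  have hE : MeasurableSet[pastSigma 𝒳 (a:ℤ)] (blockEv 1 a x1) :=
    blockEv_mem_past x1 (by omega)
  have hF : MeasurableSet[futureSigma 𝒳 ((a:ℤ) + (g:ℤ))] (blockEv (1 + (a:ℤ) + (g:ℤ)) b x2) :=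
    blockEv_mem_future x2 (by omega)
  have hmixb := mix_bound μ (i := (a:ℤ)) (q := g) hE hF
  have hstat : μ (blockEv (1 + (a:ℤ) + (g:ℤ)) b x2) = μ (blockEv 1 b x2) :=
    measure_blockEv_stat hmp (by omega) b x2
  calc (μ (blockEv 1 (a+g+b) x)).toReal
      ≤ (μ (blockEv (1 + (a:ℤ) + (g:ℤ)) b x2 ∩ blockEv 1 a x1)).toReal :=
        ENNReal.toReal_mono (measure_ne_top μ _) (measure_mono hsub)
    _ ≤ ((μ (blockEv (1 + (a:ℤ) + (g:ℤ)) b x2)).toReal + mixCoef μ g) *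
          (μ (blockEv 1 a x1)).toReal := hmixb
    _ ≤ (Mx μ b + mixCoef μ g) * Mx μ a := by
        apply mul_le_mul
        · rw [hstat]; exact add_le_add_left (le_Mx μ b x2) _
        · exact le_Mx μ a x1
        · exact ENNReal.toReal_nonneg
        · have := Mx_nonneg μ b; have := mixCoef_nonneg μ g; linarith
    _ = Mx μ a * (Mx μ b + mixCoef μ g) := mul_comm _ _


lemma tendsto_mul_Mx [Nonempty 𝒳] {μ : Measure (ℤ → 𝒳)} [IsProbabilityMeasure μ]
    (hmp : MeasurePreserving (shift (𝒳:=𝒳)) μ μ)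
    (hmix : Summable fun s : ℕ => mixCoef μ (s + 1))
    {c : ℝ} (hclt : c < 1)
    (hc : ∀ s : ℕ, 1 ≤ s → (μ {ω : ℤ → 𝒳 | ω 1 = ω (1 + (s:ℤ))}).toReal ≤ c) :
    Tendsto (fun u : ℕ => (u : ℝ) * Mx μ u) atTop (nhds 0) := by
  classical
  have hc0 : 0 ≤ c := le_trans ENNReal.toReal_nonneg (hc 1 le_rfl)
  set γ : ℝ := min ((1 - c)/2) (1/8) with hγdef
  have hγpos : 0 < γ := lt_min (by linarith) (by norm_num)
  have hγ8 : γ ≤ 1/8 := min_le_right _ _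
  have hγc : γ ≤ (1-c)/2 := min_le_left _ _
  -- find g ≥ 1 with mixCoef μ g ≤ γ
  obtain ⟨s₀, hs₀⟩ := Metric.tendsto_atTop.mp hmix.tendsto_atTop_zero γ hγpos
  set g := s₀ + 1 with hgdef
  have hdg : mixCoef μ g ≤ γ := by
    have := hs₀ s₀ le_rfl
    rw [Real.dist_eq, sub_zero] at this
    exact le_of_lt (lt_of_le_of_lt (le_abs_self _) this)
  set A := Fintype.card 𝒳 + 1 + g with hAdef
  set N : ℕ → ℕ := fun j => A * 2^j - g with hNdef
  have hgle : ∀ j, g + 1 ≤ A * 2^j := fun j =>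
    le_trans (by omega) (Nat.le_mul_of_pos_right A (by positivity))
  have hNrec : ∀ j, N (j+1) = N j + g + N j := by
    intro j
    have h1 := hgle j
    have h2 : A * 2^(j+1) = A * 2^j + A * 2^j := by rw [pow_succ]; ring
    simp only [hNdef]
    omega
  have hNbase : ∀ j, Fintype.card 𝒳 + 1 ≤ N j := by
    intro j
    have h1 := hgle j
    have h2 : A ≤ A * 2^j := Nat.le_mul_of_pos_right A (by positivity)
    simp only [hNdef]
    omega
  have hNgt : ∀ j, j < N j := by
    intro j
    have h1 : (g+1) * 2^j ≤ A * 2^j := Nat.mul_le_mul_right _ (by omega)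
    have h2 : g ≤ g * 2^j := Nat.le_mul_of_pos_right g (by positivity)
    have h3 : (g+1) * 2^j = g * 2^j + 2^j := by ring
    have h4 := Nat.lt_two_pow_self (n := j)
    simp only [hNdef]
    omega
  have hNub : ∀ j, ((N j : ℕ) : ℝ) ≤ (A:ℝ) * 2^j := by
    intro j
    have : N j ≤ A * 2^j := Nat.sub_le _ _
    calc ((N j : ℕ) : ℝ) ≤ ((A * 2^j : ℕ) : ℝ) := Nat.cast_le.mpr this
      _ = (A:ℝ) * 2^j := by push_cast; ring
  set y : ℕ → ℝ := fun j => Mx μ (N j) with hydef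
  have hy0 : ∀ j, 0 ≤ y j := fun j => Mx_nonneg μ _
  have hy_le_c : ∀ j, y j ≤ c := fun j => Mx_base hmp hc (hNbase j)
  have hyrec : ∀ j, y (j+1) ≤ y j * (y j + γ) := by
    intro j
    have h1 : y (j+1) = Mx μ (N j + g + N j) := by rw [hydef]; simp only [hNrec j]
    rw [h1]
    calc Mx μ (N j + g + N j) ≤ Mx μ (N j) * (Mx μ (N j) + mixCoef μ g) := Mx_rec hmp _ _ _
      _ ≤ y j * (y j + γ) := mul_le_mul_of_nonneg_left (add_le_add_right hdg _) (hy0 j)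
  set ρ : ℝ := c + γ with hρdef
  have hρ1 : ρ < 1 := by rw [hρdef]; linarith
  have hρ0 : 0 ≤ ρ := by rw [hρdef]; linarith
  have hstage1 : ∀ j, y j ≤ c * ρ^j := by
    intro j
    induction j with
    | zero => simpa using hy_le_c 0
    | succ j ih =>
      calc y (j+1) ≤ y j * (y j + γ) := hyrec j
        _ ≤ (c * ρ^j) * ρ := by
            apply mul_le_mul ih _ (by linarith [hy0 j, hγpos]) (by positivity)
            rw [hρdef]; linarith [hy_le_c j]
        _ = c * ρ^(j+1) := by rw [pow_succ]; ring
  obtain ⟨j₀, hj₀⟩ : ∃ j₀, c * ρ^j₀ ≤ γ := by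
    have h := (tendsto_pow_atTop_nhds_zero_of_lt_one hρ0 hρ1).const_mul c
    rw [mul_zero] at h
    obtain ⟨j₀, hj⟩ := Metric.tendsto_atTop.mp h γ hγpos
    refine ⟨j₀, ?_⟩
    have := hj j₀ le_rfl
    rw [Real.dist_eq, sub_zero] at this
    exact le_of_lt (lt_of_le_of_lt (le_abs_self _) this)
  have hstage2 : ∀ r, y (j₀ + r) ≤ γ * (2*γ)^r := by
    intro r
    induction r with
    | zero => simpa using le_trans (hstage1 j₀) hj₀
    | succ r ih =>
      have h2γ : 0 ≤ 2*γ := by linarith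
      have h2γ1 : 2*γ ≤ 1 := by linarith
      have hsm : γ * (2*γ)^r ≤ γ :=
        mul_le_of_le_one_right hγpos.le (pow_le_one₀ h2γ h2γ1)
      have h1 : y (j₀ + (r+1)) ≤ y (j₀ + r) * (y (j₀ + r) + γ) := by
        have := hyrec (j₀ + r); rwa [show j₀ + (r+1) = (j₀ + r) + 1 by ring]
      calc y (j₀ + (r+1)) ≤ y (j₀ + r) * (y (j₀ + r) + γ) := h1
        _ ≤ (γ * (2*γ)^r) * (2*γ) := by
            apply mul_le_mul ih _ (by linarith [hy0 (j₀+r), hγpos]) (by positivity)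
            linarith [ih, hsm]
        _ = γ * (2*γ)^(r+1) := by rw [pow_succ]; ring
  rw [Metric.tendsto_atTop]
  intro ε hε
  set C : ℝ := (A:ℝ) * 2^(j₀+1) * γ with hCdef
  have hC0 : 0 ≤ C := by positivity
  obtain ⟨r₀, hr₀⟩ : ∃ r₀, C * (1/2)^r₀ < ε := by
    have h := (tendsto_pow_atTop_nhds_zero_of_lt_one (by norm_num : (0:ℝ) ≤ 1/2)
      (by norm_num)).const_mul C
    rw [mul_zero] at h
    obtain ⟨r₀, hr⟩ := Metric.tendsto_atTop.mp h ε hε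
    refine ⟨r₀, ?_⟩
    have := hr r₀ le_rfl
    rw [Real.dist_eq, sub_zero] at this
    exact lt_of_le_of_lt (le_abs_self _) this
  refine ⟨N (j₀ + r₀), fun u hu => ?_⟩
  set P : ℕ → Prop := fun r => N (j₀ + r) ≤ u with hPdef
  have hr₀u : r₀ ≤ u := by have := hNgt (j₀ + r₀); omega
  have hPr₀ : P r₀ := hu
  set r := Nat.findGreatest P u with hrdef
  have hrr₀ : r₀ ≤ r := Nat.le_findGreatest hr₀u hPr₀
  have hPr : P r := Nat.findGreatest_spec hr₀u hPr₀
  have hub : u < N (j₀ + (r+1)) := by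
    by_cases hcase : r + 1 ≤ u
    · have := Nat.findGreatest_is_greatest (show Nat.findGreatest P u < r + 1 by omega) hcase
      simp only [hPdef] at this
      omega
    · have h1 := hNgt (j₀ + r)
      simp only [hPdef] at hPr
      omega
  have hMxu : Mx μ u ≤ y (j₀ + r) := Mx_antitone μ hPr
  have hcast : (u:ℝ) ≤ ((N (j₀ + (r+1)) : ℕ) : ℝ) := Nat.cast_le.mpr hub.le
  have hchain : (u:ℝ) * Mx μ u ≤ C * (1/2)^r₀ := by
    calc (u:ℝ) * Mx μ u ≤ ((N (j₀ + (r+1)) : ℕ) : ℝ) * (γ * (2*γ)^r) := by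
          apply mul_le_mul hcast (le_trans hMxu (hstage2 r)) (Mx_nonneg μ u) (Nat.cast_nonneg _)
      _ ≤ ((A:ℝ) * 2^(j₀ + r + 1)) * (γ * (2*γ)^r) := by
          apply mul_le_mul_of_nonneg_right _ (by positivity)
          have := hNub (j₀ + (r+1))
          rwa [show j₀ + (r+1) = j₀ + r + 1 by ring] at this
      _ = C * (4*γ)^r := by
          have h4 : ((4:ℝ))^r = 2^r * 2^r := by
            rw [show (4:ℝ) = 2*2 by norm_num, mul_pow]
          rw [show j₀ + r + 1 = (j₀ + 1) + r by ring, pow_add, hCdef, mul_pow, mul_pow, h4]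
          ring
      _ ≤ C * (1/2)^r := by
          apply mul_le_mul_of_nonneg_left _ hC0
          apply pow_le_pow_left₀ (by positivity)
          linarith
      _ ≤ C * (1/2)^r₀ := by
          apply mul_le_mul_of_nonneg_left _ hC0
          exact pow_le_pow_of_le_one (by norm_num) (by norm_num) hrr₀
  rw [Real.dist_eq, sub_zero, abs_of_nonneg (mul_nonneg (Nat.cast_nonneg u) (Mx_nonneg μ u))]
  exact lt_of_le_of_lt hchain hr₀


lemma mul_tendsto_zero_of_summable_antitone {f : ℕ → ℝ} (hpos : ∀ n, 0 ≤ f n)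
    (hanti : Antitone f) (hsum : Summable f) :
    Tendsto (fun n : ℕ => (n : ℝ) * f n) atTop (nhds 0) := by
  rw [Metric.tendsto_atTop]
  intro ε hε
  have htail : Tendsto (fun N => ∑' k, f (k + N)) atTop (nhds 0) := by
    exact_mod_cast tendsto_sum_nat_add f
  obtain ⟨N, hN⟩ := (Metric.tendsto_atTop.mp htail (ε/4) (by linarith)).imp
    (fun N h => h N le_rfl)
  have hNtail : ∑' k, f (k + N) < ε/4 := by
    have := hN; rw [Real.dist_eq, sub_zero] at this
    calc ∑' k, f (k + N) ≤ |∑' k, f (k + N)| := le_abs_self _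
      _ < ε/4 := this
  have hf0 : Tendsto f atTop (nhds 0) := hsum.tendsto_atTop_zero
  obtain ⟨M, hM⟩ := Metric.tendsto_atTop.mp hf0 (ε / (2 * (N + 1))) (by positivity)
  refine ⟨max (2*N + 1) M, fun n hn => ?_⟩
  have hn1 : 2*N + 1 ≤ n := le_trans (le_max_left _ _) hn
  have hn2 : M ≤ n := le_trans (le_max_right _ _) hn
  have hfn : f n < ε / (2 * (N + 1)) := by
    have := hM n hn2; rw [Real.dist_eq, sub_zero] at this
    exact lt_of_le_of_lt (le_abs_self _) this
  -- (n - N) * f n ≤ sum over Ico N n ≤ tail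
  have hsum1 : ((n - N : ℕ) : ℝ) * f n ≤ ∑ j ∈ Finset.Ico N n, f j := by
    have := Finset.card_nsmul_le_sum (Finset.Ico N n) f (f n)
      (fun j hj => hanti (le_of_lt (Finset.mem_Ico.mp hj).2))
    simpa [Nat.card_Ico, nsmul_eq_mul] using this
  have hsum2 : ∑ j ∈ Finset.Ico N n, f j ≤ ∑' k, f (k + N) := by
    rw [Finset.sum_Ico_eq_sum_range]
    calc ∑ j ∈ Finset.range (n - N), f (N + j)
        = ∑ j ∈ Finset.range (n - N), f (j + N) := by
          apply Finset.sum_congr rfl; intro j _; rw [add_comm]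
      _ ≤ ∑' k, f (k + N) := Summable.sum_le_tsum _ (fun k _ => hpos _)
          ((summable_nat_add_iff N).mpr hsum)
  have key : ((n - N : ℕ) : ℝ) * f n < ε/4 := lt_of_le_of_lt (hsum1.trans hsum2) hNtail
  rw [Real.dist_eq, sub_zero, abs_of_nonneg (mul_nonneg (by positivity) (hpos n))]
  have hsplit : (n : ℝ) * f n = ((n - N : ℕ) : ℝ) * f n + (N:ℝ) * f n := by
    have : ((n - N : ℕ) : ℝ) = (n:ℝ) - N := by
      have : N ≤ n := by omega
      push_cast [this]; ring
    rw [this]; ring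
  have hNfn : (N:ℝ) * f n ≤ (N:ℝ) * (ε / (2 * (N + 1))) :=
    mul_le_mul_of_nonneg_left hfn.le (by positivity)
  have hlt : (N:ℝ) * (ε / (2 * (N + 1))) < ε/2 := by
    have h1 : (0:ℝ) < 2 * ((N:ℝ) + 1) := by positivity
    rw [mul_div_assoc'] at *
    rw [div_lt_iff₀ h1]
    nlinarith [Nat.cast_nonneg (α := ℝ) N]
  linarith

lemma key_bound [Nonempty 𝒳] {μ : Measure (ℤ → 𝒳)} [IsProbabilityMeasure μ]
    (hmp : MeasurePreserving (shift (𝒳:=𝒳)) μ μ)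
    (s t u : ℕ) (hs : 1 ≤ s) (hu1 : 1 ≤ u) (h3u : 3*u ≤ t) :
    (μ {ω : ℤ → 𝒳 | ∀ i : ℕ, 1 ≤ i → i ≤ t → ω ((i:ℤ)) = ω ((i:ℤ) + (s:ℤ))}).toReal
      ≤ Mx μ u + mixCoef μ u := by
  classical
  set k := 2*u/s + 1 with hk
  have hdiv := Nat.div_add_mod (2*u) s
  have hmod := Nat.mod_lt (2*u) (show 0 < s by omega)
  have hq1 : k*s = s*(2*u/s) + s := by rw [hk, Nat.add_mul, Nat.one_mul, Nat.mul_comm]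
  have hq2 : (k-1)*s = s*(2*u/s) := by rw [hk, Nat.add_sub_cancel, Nat.mul_comm]
  have hks : 2*u < k*s := by omega
  have hk1s : (k-1)*s ≤ 2*u := by omega
  have hukt : u + k*s ≤ t + s := by omega
  have hchain : {ω : ℤ → 𝒳 | ∀ i : ℕ, 1 ≤ i → i ≤ t → ω ((i:ℤ)) = ω ((i:ℤ) + (s:ℤ))} ⊆
      ⋃ x : Fin u → 𝒳, (blockEv (1 + ((k*s : ℕ):ℤ)) u x ∩ blockEv 1 u x) := by
    intro ω hω
    have hiter : ∀ (m : ℕ) (i : ℕ), 1 ≤ i → i + m*s ≤ t + s →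
        ω ((i:ℤ)) = ω ((i:ℤ) + ((m*s : ℕ):ℤ)) := by
      intro m
      induction m with
      | zero => intro i _ _; simp
      | succ m ih =>
        intro i hi1 hile
        have hmul : (m+1)*s = m*s + s := by ring
        have h1 : ω ((i:ℤ)) = ω ((i:ℤ) + ((m*s:ℕ):ℤ)) := ih i hi1 (by omega)
        have h2 := hω (i + m*s) (by omega) (by omega)
        have e1 : ((i + m*s : ℕ):ℤ) = (i:ℤ) + ((m*s:ℕ):ℤ) := by push_cast; ring
        rw [e1] at h2
        rw [h1, h2]
        congr 1
        push_cast; ring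
    refine Set.mem_iUnion.mpr ⟨fun j => ω (1 + ((j:ℕ):ℤ)), ?_, fun j => rfl⟩
    intro j
    have hj := j.2
    have := hiter k (1 + (j:ℕ)) (by omega) (by omega)
    rw [show ((1:ℤ) + ((k*s:ℕ):ℤ)) + ((j:ℕ):ℤ) = ((1 + (j:ℕ) : ℕ):ℤ) + ((k*s:ℕ):ℤ)
      by push_cast; ring, ← this]
    show ω (((1 + (j:ℕ) : ℕ)):ℤ) = ω (1 + ((j:ℕ):ℤ))
    have harg : (((1 + (j:ℕ) : ℕ)):ℤ) = 1 + ((j:ℕ):ℤ) := by push_cast; ring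
    rw [harg]
  have hF : ∀ x : Fin u → 𝒳,
      MeasurableSet[futureSigma 𝒳 ((u:ℤ) + ((u:ℕ):ℤ))] (blockEv (1 + ((k*s:ℕ):ℤ)) u x) := by
    intro x
    apply blockEv_mem_future
    have : (2*u : ℕ) < k*s := hks
    omega
  have hE : ∀ x : Fin u → 𝒳, MeasurableSet[pastSigma 𝒳 ((u:ℤ))] (blockEv 1 u x) :=
    fun x => blockEv_mem_past x (by omega)
  have hstat : ∀ x : Fin u → 𝒳,
      μ (blockEv (1 + ((k*s:ℕ):ℤ)) u x) = μ (blockEv 1 u x) :=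
    fun x => measure_blockEv_stat hmp (by omega) u x
  have hsum_le_one : ∑ x : Fin u → 𝒳, (μ (blockEv 1 u x)).toReal ≤ 1 := by
    have hdisj : Pairwise (Function.onFun Disjoint fun x : Fin u → 𝒳 => blockEv 1 u x) := by
      intro x y hxy
      rw [Function.onFun, Set.disjoint_left]
      intro ω hx hy2
      exact hxy (funext fun j => by rw [← hx j, ← hy2 j])
    have hUle := measure_iUnion (μ := μ) hdisj (fun x => blockEv_measurableSet 1 u x)
    have hle : ∑' x : Fin u → 𝒳, μ (blockEv 1 u x) ≤ 1 := by
      rw [← hUle]; exact prob_le_one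
    rw [tsum_fintype] at hle
    calc ∑ x : Fin u → 𝒳, (μ (blockEv 1 u x)).toReal
        = (∑ x : Fin u → 𝒳, μ (blockEv 1 u x)).toReal :=
          (ENNReal.toReal_sum (fun _ _ => measure_ne_top μ _)).symm
      _ ≤ (1 : ℝ≥0∞).toReal := ENNReal.toReal_mono (by simp) hle
      _ = 1 := by simp
  have hsum_ne_top : (∑ x : Fin u → 𝒳, μ (blockEv (1 + ((k*s:ℕ):ℤ)) u x ∩ blockEv 1 u x)) ≠ ⊤ :=
    (ENNReal.sum_lt_top.mpr fun _ _ => measure_lt_top μ _).ne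
  calc (μ {ω : ℤ → 𝒳 | ∀ i : ℕ, 1 ≤ i → i ≤ t → ω ((i:ℤ)) = ω ((i:ℤ) + (s:ℤ))}).toReal
      ≤ (∑ x : Fin u → 𝒳, μ (blockEv (1 + ((k*s:ℕ):ℤ)) u x ∩ blockEv 1 u x)).toReal := by
        apply ENNReal.toReal_mono hsum_ne_top
        calc μ {ω : ℤ → 𝒳 | ∀ i : ℕ, 1 ≤ i → i ≤ t → ω ((i:ℤ)) = ω ((i:ℤ) + (s:ℤ))}
            ≤ μ (⋃ x : Fin u → 𝒳, (blockEv (1 + ((k*s:ℕ):ℤ)) u x ∩ blockEv 1 u x)) :=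
              measure_mono hchain
          _ ≤ ∑' x : Fin u → 𝒳, μ (blockEv (1 + ((k*s:ℕ):ℤ)) u x ∩ blockEv 1 u x) :=
              measure_iUnion_le _
          _ = _ := tsum_fintype _
    _ = ∑ x : Fin u → 𝒳, (μ (blockEv (1 + ((k*s:ℕ):ℤ)) u x ∩ blockEv 1 u x)).toReal :=
        ENNReal.toReal_sum (fun _ _ => measure_ne_top μ _)
    _ ≤ ∑ x : Fin u → 𝒳, ((μ (blockEv (1 + ((k*s:ℕ):ℤ)) u x)).toReal + mixCoef μ u) *
          (μ (blockEv 1 u x)).toReal :=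
        Finset.sum_le_sum fun x _ => mix_bound μ (hE x) (hF x)
    _ = ∑ x : Fin u → 𝒳, ((μ (blockEv 1 u x)).toReal * (μ (blockEv 1 u x)).toReal
          + mixCoef μ u * (μ (blockEv 1 u x)).toReal) := by
        apply Finset.sum_congr rfl
        intro x _
        rw [hstat x]; ring
    _ = (∑ x : Fin u → 𝒳, (μ (blockEv 1 u x)).toReal * (μ (blockEv 1 u x)).toReal)
          + mixCoef μ u * ∑ x : Fin u → 𝒳, (μ (blockEv 1 u x)).toReal := by
        rw [Finset.sum_add_distrib, Finset.mul_sum]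
    _ ≤ Mx μ u * 1 + mixCoef μ u * 1 := by
        have h1 : (∑ x : Fin u → 𝒳, (μ (blockEv 1 u x)).toReal * (μ (blockEv 1 u x)).toReal)
            ≤ ∑ x : Fin u → 𝒳, Mx μ u * (μ (blockEv 1 u x)).toReal :=
          Finset.sum_le_sum fun x _ =>
            mul_le_mul_of_nonneg_right (le_Mx μ u x) ENNReal.toReal_nonneg
        have h2 : ∑ x : Fin u → 𝒳, Mx μ u * (μ (blockEv 1 u x)).toReal ≤ Mx μ u * 1 := by
          rw [← Finset.mul_sum]
          exact mul_le_mul_of_nonneg_left hsum_le_one (Mx_nonneg μ u)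
        have h3 : mixCoef μ u * (∑ x : Fin u → 𝒳, (μ (blockEv 1 u x)).toReal) ≤ mixCoef μ u * 1 :=
          mul_le_mul_of_nonneg_left hsum_le_one (mixCoef_nonneg μ u)
        linarith
    _ = Mx μ u + mixCoef μ u := by ring

/-- Uniform bound on repetition probabilities
(Lemma: matching probability). -/
theorem repetition_probability_bound
    (μ : Measure (ℤ → 𝒳)) [IsProbabilityMeasure μ]
    (herg : Ergodic (shift (𝒳 := 𝒳)) μ)
    -- summable strong mixing coefficients
    (hmix : Summable fun s : ℕ => mixCoef μ (s + 1))
    -- aperiodicity: sup_{s ≥ 1} μ(X₁ = X_{1+s}) < 1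
    (hrec : ∃ c < (1 : ℝ), ∀ s : ℕ, 1 ≤ s → (μ {ω | ω 1 = ω (1 + (s : ℤ))}).toReal ≤ c)
    -- the entropy rate exists, is finite and positive
    (H₁ : ℝ) (hH₁pos : 0 < H₁)
    (hH₁ : Tendsto (fun t : ℕ => shannonH μ t / t) atTop (nhds H₁))
    (η β : ℝ) (hη : 0 < η) (hβ : 0 < β) :
    Tendsto (fun n : ℕ => Real.log n *
        sSup {v : ℝ | ∃ s t : ℕ, 1 ≤ s ∧ s ≤ ell β n ∧
          (1 + η) * Real.log n / H₁ ≤ (t : ℝ) ∧ (t : ℝ) ≤ β * Real.log n ∧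
          v = (μ {ω | ∀ i : ℕ, 1 ≤ i → i ≤ t →
            ω ((i : ℤ)) = ω ((i : ℤ) + (s : ℤ))}).toReal})
      atTop (nhds 0) := by
  classical
  obtain ⟨c, hclt, hc⟩ := hrec
  have hmp : MeasurePreserving (shift (𝒳:=𝒳)) μ μ := herg.toMeasurePreserving
  haveI hne : Nonempty 𝒳 := by
    by_contra h
    rw [not_nonempty_iff] at h
    have hempty : (Set.univ : Set (ℤ → 𝒳)) = ∅ :=
      Set.univ_eq_empty_iff.mpr ⟨fun f => h.elim (f 0)⟩
    have h1 : μ Set.univ = 1 := measure_univ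
    rw [hempty, measure_empty] at h1
    exact absurd h1 (by norm_num)
  set S : ℕ → Set ℝ := fun n => {v : ℝ | ∃ s t : ℕ, 1 ≤ s ∧ s ≤ ell β n ∧
      (1 + η) * Real.log n / H₁ ≤ (t : ℝ) ∧ (t : ℝ) ≤ β * Real.log n ∧
      v = (μ {ω | ∀ i : ℕ, 1 ≤ i → i ≤ t →
        ω ((i : ℤ)) = ω ((i : ℤ) + (s : ℤ))}).toReal} with hSdef
  set T : ℕ → ℝ := fun n => (1 + η) * Real.log n / H₁ with hTdef
  set U : ℕ → ℕ := fun n => ⌈T n⌉₊ / 4 with hUdef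
  have hsup0 : ∀ n : ℕ, 0 ≤ sSup (S n) := by
    intro n
    apply Real.sSup_nonneg
    rintro v ⟨s, t, _, _, _, _, rfl⟩
    exact ENNReal.toReal_nonneg
  have hub : ∀ n : ℕ, 4 ≤ ⌈T n⌉₊ → ∀ v ∈ S n, v ≤ Mx μ (U n) + mixCoef μ (U n) := by
    intro n h4 v hv
    obtain ⟨s, t, hs1, _, hTt, _, rfl⟩ := hv
    have ht₀ : ⌈T n⌉₊ ≤ t := Nat.ceil_le.mpr hTt
    have hdiv4 := Nat.div_add_mod (⌈T n⌉₊) 4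
    have hmod4 := Nat.mod_lt (⌈T n⌉₊) (show 0 < 4 by norm_num)
    have hUn : U n = ⌈T n⌉₊ / 4 := rfl
    have hU1 : 1 ≤ U n := by omega
    have h3U : 3 * U n ≤ ⌈T n⌉₊ := by omega
    calc (μ {ω : ℤ → 𝒳 | ∀ i : ℕ, 1 ≤ i → i ≤ t →
            ω ((i:ℤ)) = ω ((i:ℤ) + (s:ℤ))}).toReal
        ≤ (μ {ω : ℤ → 𝒳 | ∀ i : ℕ, 1 ≤ i → i ≤ ⌈T n⌉₊ →
            ω ((i:ℤ)) = ω ((i:ℤ) + (s:ℤ))}).toReal := by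
          apply ENNReal.toReal_mono (measure_ne_top μ _)
          apply measure_mono
          intro ω hω i h1 h2
          exact hω i h1 (le_trans h2 ht₀)
      _ ≤ Mx μ (U n) + mixCoef μ (U n) := key_bound hmp s (⌈T n⌉₊) (U n) hs1 hU1 h3U
  have hsup : ∀ n : ℕ, 4 ≤ ⌈T n⌉₊ → sSup (S n) ≤ Mx μ (U n) + mixCoef μ (U n) :=
    fun n h4 => Real.sSup_le (hub n h4)
      (add_nonneg (Mx_nonneg μ _) (mixCoef_nonneg μ _))
  set α : ℝ := (1 + η) / (8 * H₁) with hαdef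
  have hαpos : 0 < α := by rw [hαdef]; positivity
  have hlogT : Tendsto (fun n : ℕ => Real.log n) atTop atTop :=
    Real.tendsto_log_atTop.comp tendsto_natCast_atTop_atTop
  have hTat : Tendsto T atTop atTop := by
    have heq : T = fun n : ℕ => ((1 + η) / H₁) * Real.log n := by
      funext n; rw [hTdef]; ring
    rw [heq]
    exact hlogT.const_mul_atTop (by positivity)
  have hUlow : ∀ᶠ n : ℕ in atTop, α * Real.log n ≤ (U n : ℝ) := by
    filter_upwards [hTat.eventually_ge_atTop 8] with n h8
    have h1 : T n ≤ (⌈T n⌉₊ : ℝ) := Nat.le_ceil _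
    have hdiv4 := Nat.div_add_mod (⌈T n⌉₊) 4
    have hmod4 := Nat.mod_lt (⌈T n⌉₊) (show 0 < 4 by norm_num)
    have hUn : U n = ⌈T n⌉₊ / 4 := rfl
    have h2 : (⌈T n⌉₊ : ℝ) ≤ 4 * ((U n : ℕ) : ℝ) + 3 := by
      have : ⌈T n⌉₊ ≤ 4 * U n + 3 := by omega
      exact_mod_cast Nat.cast_le.mpr this
    have h3 : α * Real.log n = T n / 8 := by
      have hTn : T n = (1 + η) * Real.log n / H₁ := rfl
      have hαn : α = (1 + η) / (8 * H₁) := rfl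
      rw [hTn, hαn]
      ring
    rw [h3]
    have : T n / 8 ≤ (T n - 3) / 4 := by linarith
    linarith
  have hUtop : Tendsto U atTop atTop := by
    have h1 : Tendsto (fun n : ℕ => α * Real.log n) atTop atTop :=
      hlogT.const_mul_atTop hαpos
    have h2 : Tendsto (fun n : ℕ => ((U n : ℕ) : ℝ)) atTop atTop :=
      tendsto_atTop_mono' atTop hUlow h1
    exact tendsto_natCast_atTop_iff.mp h2
  have hdsum : Summable (mixCoef μ) := (summable_nat_add_iff 1).mp hmix
  have hMx0 : Tendsto (fun n : ℕ => ((U n : ℕ) : ℝ) * Mx μ (U n)) atTop (nhds 0) :=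
    (tendsto_mul_Mx hmp hmix hclt hc).comp hUtop
  have hd0 : Tendsto (fun n : ℕ => ((U n : ℕ) : ℝ) * mixCoef μ (U n)) atTop (nhds 0) :=
    (mul_tendsto_zero_of_summable_antitone (mixCoef_nonneg μ) (mixCoef_antitone μ)
      hdsum).comp hUtop
  have hlim : Tendsto (fun n : ℕ =>
      (1/α) * (((U n : ℕ) : ℝ) * Mx μ (U n) + ((U n : ℕ) : ℝ) * mixCoef μ (U n)))
      atTop (nhds 0) := by
    have := (hMx0.add hd0).const_mul (1/α)
    simpa using this
  apply tendsto_of_tendsto_of_tendsto_of_le_of_le' tendsto_const_nhds hlim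
  · filter_upwards [eventually_ge_atTop 1] with n hn1
    have hlog0 : 0 ≤ Real.log n := Real.log_nonneg (by exact_mod_cast hn1)
    exact mul_nonneg hlog0 (hsup0 n)
  · filter_upwards [eventually_ge_atTop 1, hTat.eventually_ge_atTop 8, hUlow] with n hn1 h8 hUl
    have hlog0 : 0 ≤ Real.log n := Real.log_nonneg (by exact_mod_cast hn1)
    have h4 : 4 ≤ ⌈T n⌉₊ := by
      have h1 : (8:ℝ) ≤ (⌈T n⌉₊ : ℝ) := le_trans h8 (Nat.le_ceil _)
      exact_mod_cast le_trans (by norm_num : (4:ℝ) ≤ 8) h1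
    have hB0 : 0 ≤ Mx μ (U n) + mixCoef μ (U n) :=
      add_nonneg (Mx_nonneg μ _) (mixCoef_nonneg μ _)
    calc Real.log n * sSup (S n)
        ≤ Real.log n * (Mx μ (U n) + mixCoef μ (U n)) :=
          mul_le_mul_of_nonneg_left (hsup n h4) hlog0
      _ ≤ (((U n : ℕ) : ℝ) / α) * (Mx μ (U n) + mixCoef μ (U n)) := by
          apply mul_le_mul_of_nonneg_right _ hB0
          rw [le_div_iff₀ hαpos]
          calc Real.log n * α = α * Real.log n := mul_comm _ _
            _ ≤ (U n : ℝ) := hUl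
      _ = (1/α) * (((U n : ℕ) : ℝ) * Mx μ (U n) + ((U n : ℕ) : ℝ) * mixCoef μ (U n)) := by
          field_simp


end
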